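/- Let G be the CPDAG of the Markov equivalence class of a DAG, and let X and Y be distinct nodes that are not adjacent in G. Then X is an explicit ancestor of Y in G if and only if X and Y are not d-separated by Pa_G(X) ∪ Sib_G(X) in the DAGs of the Markov equivalence class represented by G (the d-separation relations being the same in every DAG of the MEC). -/

import Mathlib

/-- A directed acyclic graph on node set `V`: a directed edge relation with no
directed cycles (no edge `a → b` together with a directed path from `b` back to `a`). -/
structure Dag (V : Type*) where
  edge : V → V → Prop
  acyclic : ∀ a b : V, edge a b → ¬ Relation.ReflTransGen edge b a

variable {V : Type*}

namespace Dag

/-- `a` is an ancestor of `b` (equivalently, `b` is a descendant of `a`):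
there is a directed path from `a` to `b`; every node is its own ancestor. -/
def Anc (D : Dag V) (a b : V) : Prop := Relation.ReflTransGen D.edge a b

/-- `a` and `b` are adjacent (joined by an edge in either direction). -/
def Adj (D : Dag V) (a b : V) : Prop := D.edge a b ∨ D.edge b a

/-- The parents of `x` in the DAG `D`. -/
def Pa (D : Dag V) (x : V) : Set V := {a | D.edge a x}

/-- The Markov blanket of `x`: parents, children, and parents of children of `x`
(excluding `x` itself). -/
def MB (D : Dag V) (x : V) : Set V :=
  {v | v ≠ x ∧ (D.edge v x ∨ D.edge x v ∨ ∃ c : V, D.edge x c ∧ D.edge v c)}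

end Dag

/-- A path between `x` and `y` with respect to an adjacency relation `A`:
a sequence of distinct nodes, starting at `x` and ending at `y`, in which
consecutive nodes are adjacent. `n` is the number of edges of the path. -/
structure GPath (A : V → V → Prop) (x y : V) where
  n : ℕ
  f : Fin (n + 1) → V
  inj : Function.Injective f
  first : f ⟨0, by omega⟩ = x
  last : f ⟨n, by omega⟩ = y
  adj : ∀ i : Fin n, A (f i.castSucc) (f i.succ)

namespace GPath

/-- The non-endpoint node at position `i` of the path `p` is a collider with respect
to the directed edge relation `E`: both incident edges of the path point into it. -/
def ColliderAt {A : V → V → Prop} {x y : V} (p : GPath A x y)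
    (E : V → V → Prop) (i : ℕ) : Prop :=
  ∃ (_ : 0 < i) (_ : i < p.n),
    E (p.f ⟨i - 1, by omega⟩) (p.f ⟨i, by omega⟩) ∧
    E (p.f ⟨i + 1, by omega⟩) (p.f ⟨i, by omega⟩)

/-- The path `p` is blocked by the node set `S` in the DAG `D`: it contains a
non-collider that lies in `S`, or a collider such that neither the collider nor any
of its descendants lies in `S`. -/
def Blocked {A : V → V → Prop} {x y : V} (p : GPath A x y)
    (D : Dag V) (S : Set V) : Prop :=
  ∃ (i : ℕ) (_ : 0 < i) (_ : i < p.n),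
    (¬ p.ColliderAt D.edge i ∧ p.f ⟨i, by omega⟩ ∈ S) ∨
    (p.ColliderAt D.edge i ∧ ∀ d : V, D.Anc (p.f ⟨i, by omega⟩) d → d ∉ S)

end GPath

namespace Dag

/-- `x` and `y` are d-separated by `S` in the DAG `D`: every path between `x` and `y`
is blocked by `S`. -/
def dSep (D : Dag V) (x y : V) (S : Set V) : Prop :=
  ∀ p : GPath D.Adj x y, p.Blocked D S

/-- Two DAGs on the same node set are Markov equivalent if they have exactly the same
d-separation relations. -/
def MEquiv (D D' : Dag V) : Prop :=
  ∀ (x y : V) (S : Set V), D.dSep x y S ↔ D'.dSep x y S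

/-- The edge between `a` and `b` is directed `a → b` in the CPDAG of the Markov
equivalence class of `D`: the edge `a → b` holds in every DAG Markov equivalent to `D`. -/
def CpDir (D : Dag V) (a b : V) : Prop :=
  ∀ D' : Dag V, D.MEquiv D' → D'.edge a b

/-- The edge between `a` and `b` is undirected (`a − b`) in the CPDAG: `a` and `b` are
adjacent (the CPDAG has the same adjacencies as the DAGs of the MEC) but the edge is not
directed either way in the CPDAG. -/
def CpUndir (D : Dag V) (a b : V) : Prop :=
  D.Adj a b ∧ ¬ D.CpDir a b ∧ ¬ D.CpDir b a

/-- `Pa_G(a)`: the nodes with a directed edge into `a` in the CPDAG. -/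
def CpPa (D : Dag V) (a : V) : Set V := {p | D.CpDir p a}

/-- `Ch_G(a)`: the nodes `b` with the edge directed `a → b` in the CPDAG. -/
def CpCh (D : Dag V) (a : V) : Set V := {c | D.CpDir a c}

/-- `Sib_G(a)`: the nodes joined to `a` by an undirected edge in the CPDAG. -/
def CpSib (D : Dag V) (a : V) : Set V := {s | D.CpUndir a s}

end Dag

namespace GPath

/-- `p` is a possibly directed path in the CPDAG: no edge on it is directed
backwards (as `V_i ← V_{i+1}`) in the CPDAG. -/
def CpPossiblyDirected {D : Dag V} {x y : V} (p : GPath D.Adj x y) : Prop :=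
  ∀ i : Fin p.n, ¬ D.CpDir (p.f i.succ) (p.f i.castSucc)

/-- `p` is a (fully) directed path in the CPDAG: every edge on it is directed
forwards in the CPDAG. -/
def CpDirected {D : Dag V} {x y : V} (p : GPath D.Adj x y) : Prop :=
  ∀ i : Fin p.n, D.CpDir (p.f i.castSucc) (p.f i.succ)

/-- `p` is a directed path from `x` to `y` in the DAG `D` itself. -/
def DirectedIn {D : Dag V} {x y : V} (p : GPath D.Adj x y) : Prop :=
  ∀ i : Fin p.n, D.edge (p.f i.castSucc) (p.f i.succ)

/-- `p` is unshielded: for every three consecutive nodes on it, the first and the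
third are non-adjacent. -/
def Unshielded {D : Dag V} {x y : V} (p : GPath D.Adj x y) : Prop :=
  ∀ (i : ℕ) (_ : i + 2 ≤ p.n), ¬ D.Adj (p.f ⟨i, by omega⟩) (p.f ⟨i + 2, by omega⟩)

end GPath

namespace Dag

/-- `x` is a possible ancestor of `y` in the CPDAG: there is a possibly directed path
from `x` to `y`. -/
def PossAn (D : Dag V) (x y : V) : Prop :=
  ∃ p : GPath D.Adj x y, p.CpPossiblyDirected

/-- `x` is an explicit ancestor of `y` in the CPDAG: there is a fully directed path
from `x` to `y` in the CPDAG. -/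
def ExplAn (D : Dag V) (x y : V) : Prop :=
  ∃ p : GPath D.Adj x y, p.CpDirected

/-- The CPDAG is amenable relative to `(x, y)`: every possibly directed path from
`x` to `y` starts with a directed edge out of `x`. -/
def Amenable (D : Dag V) (x y : V) : Prop :=
  ∀ p : GPath D.Adj x y, p.CpPossiblyDirected →
    ∀ _ : 0 < p.n, D.CpDir (p.f ⟨0, by omega⟩) (p.f ⟨1, by omega⟩)

/-- `S` is a valid adjustment set for `(x, y)` in the DAG `D`:
(i) no element of `S` is a descendant of any node `w ≠ x` lying on a directed path
from `x` to `y`, and (ii) every path between `x` and `y` that is not a directed path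
from `x` to `y` is blocked by `S`. -/
def ValidAdjustment (D : Dag V) (x y : V) (S : Set V) : Prop :=
  (∀ s ∈ S, ∀ w : V, w ≠ x → D.Anc x w → D.Anc w y → ¬ D.Anc w s) ∧
  (∀ p : GPath D.Adj x y, ¬ p.DirectedIn → p.Blocked D S)

/-- `Cn_D(x, y)`: the nodes `w ≠ x` lying on some directed path from `x` to `y` in `D`. -/
def Cn (D : Dag V) (x y : V) : Set V := {w | w ≠ x ∧ D.Anc x w ∧ D.Anc w y}

end Dag

/- ============ Auxiliary development ============ -/

section Aux

open Classical

variable {V : Type*}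

namespace Dag

lemma not_edge_self (D : Dag V) (a : V) : ¬ D.edge a a :=
  fun h => D.acyclic a a h Relation.ReflTransGen.refl

lemma not_edge_both (D : Dag V) {a b : V} (h : D.edge a b) (h' : D.edge b a) : False :=
  D.acyclic a b h (Relation.ReflTransGen.single h')

lemma edge_anc (D : Dag V) {a b : V} (h : D.edge a b) : D.Anc a b :=
  Relation.ReflTransGen.single h

lemma anc_refl (D : Dag V) (a : V) : D.Anc a a := Relation.ReflTransGen.refl

lemma anc_trans (D : Dag V) {a b c : V} (h : D.Anc a b) (h' : D.Anc b c) : D.Anc a c :=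
  Relation.ReflTransGen.trans h h'

lemma not_edge_of_anc (D : Dag V) {a b : V} (h : D.Anc a b) : ¬ D.edge b a :=
  fun h' => D.acyclic b a h' h

lemma anc_antisymm (D : Dag V) {a b : V} (h : D.Anc a b) (h' : D.Anc b a) : a = b := by
  rcases Relation.ReflTransGen.cases_head h with rfl | ⟨c, hac, hcb⟩
  · rfl
  · exact absurd (hcb.trans h') (D.acyclic a c hac)

lemma adj_symm (D : Dag V) {a b : V} (h : D.Adj a b) : D.Adj b a := h.symm

lemma adj_ne (D : Dag V) {a b : V} (h : D.Adj a b) : a ≠ b := by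
  rintro rfl
  rcases h with h | h <;> exact D.not_edge_self a h

lemma mequiv_refl (D : Dag V) : D.MEquiv D := fun _ _ _ => Iff.rfl

lemma mequiv_symm {D D' : Dag V} (h : D.MEquiv D') : D'.MEquiv D :=
  fun x y S => (h x y S).symm

lemma mequiv_trans {D D' D'' : Dag V} (h : D.MEquiv D') (h' : D'.MEquiv D'') :
    D.MEquiv D'' := fun x y S => (h x y S).trans (h' x y S)

lemma cpdir_edge {D : Dag V} {a b : V} (h : D.CpDir a b) : D.edge a b :=
  h D (D.mequiv_refl)

lemma cpundir_symm {D : Dag V} {a b : V} (h : D.CpUndir a b) : D.CpUndir b a :=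
  ⟨h.1.symm, h.2.2, h.2.1⟩

lemma edge_class (D : Dag V) {a b : V} (h : D.edge a b) :
    D.CpDir a b ∨ D.CpUndir a b := by
  by_cases h1 : D.CpDir a b
  · exact Or.inl h1
  · refine Or.inr ⟨Or.inl h, h1, fun h2 => ?_⟩
    exact D.not_edge_both h (cpdir_edge h2)

end Dag

/-- ℕ-indexed path predicate. -/
def IsPathF (A : V → V → Prop) (x y : V) (g : ℕ → V) (n : ℕ) : Prop :=
  g 0 = x ∧ g n = y ∧ (∀ i < n, A (g i) (g (i + 1))) ∧
    (∀ i ≤ n, ∀ j ≤ n, g i = g j → i = j)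

/-- collider at interior position `i` (for `0 < i < n`). -/
def CollF (D : Dag V) (g : ℕ → V) (i : ℕ) : Prop :=
  D.edge (g (i - 1)) (g i) ∧ D.edge (g (i + 1)) (g i)

def BlockF (D : Dag V) (S : Set V) (g : ℕ → V) (n : ℕ) : Prop :=
  ∃ i, 0 < i ∧ i < n ∧
    ((¬ CollF D g i ∧ g i ∈ S) ∨ (CollF D g i ∧ ∀ d : V, D.Anc (g i) d → d ∉ S))

namespace GPath

variable {A : V → V → Prop} {x y : V}

/-- clamped node function of a `GPath`. -/
def vf (p : GPath A x y) : ℕ → V := fun i => p.f ⟨min i p.n, by omega⟩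

lemma vf_eq (p : GPath A x y) {i : ℕ} (h : i ≤ p.n) :
    p.vf i = p.f ⟨i, Nat.lt_succ_of_le h⟩ := by
  simp only [vf]
  congr 1
  exact Fin.ext (by simpa using h)

lemma vf_isPathF (p : GPath A x y) : IsPathF A x y p.vf p.n := by
  refine ⟨?_, ?_, ?_, ?_⟩
  · rw [p.vf_eq (by omega)]; exact p.first
  · rw [p.vf_eq (le_refl _)]; exact p.last
  · intro i hi
    have h1 := p.adj ⟨i, hi⟩
    rw [p.vf_eq (by omega), p.vf_eq (by omega)]
    have e1 : (⟨i, Nat.lt_succ_of_le (by omega)⟩ : Fin (p.n + 1)) = (Fin.castSucc ⟨i, hi⟩) :=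
      Fin.ext (by simp)
    have e2 : (⟨i + 1, Nat.lt_succ_of_le (by omega)⟩ : Fin (p.n + 1)) = (Fin.succ ⟨i, hi⟩) :=
      Fin.ext (by simp)
    rw [e1, e2]; exact h1
  · intro i hi j hj hij
    rw [p.vf_eq hi, p.vf_eq hj] at hij
    have := p.inj hij
    simpa using congrArg Fin.val this

lemma colliderAt_iff_collF (p : GPath A x y) (D : Dag V) {i : ℕ}
    (h1 : 0 < i) (h2 : i < p.n) :
    p.ColliderAt D.edge i ↔ CollF D p.vf i := by
  constructor
  · rintro ⟨hh1, hh2, ha, hb⟩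
    constructor
    · rw [p.vf_eq (show i - 1 ≤ p.n by omega), p.vf_eq (show i ≤ p.n by omega)]
      exact ha
    · rw [p.vf_eq (show i + 1 ≤ p.n by omega), p.vf_eq (show i ≤ p.n by omega)]
      exact hb
  · rintro ⟨ha, hb⟩
    refine ⟨h1, h2, ?_, ?_⟩
    · rw [p.vf_eq (show i - 1 ≤ p.n by omega), p.vf_eq (show i ≤ p.n by omega)] at ha
      exact ha
    · rw [p.vf_eq (show i + 1 ≤ p.n by omega), p.vf_eq (show i ≤ p.n by omega)] at hb
      exact hb

lemma blocked_iff_blockF (p : GPath A x y) (D : Dag V) (S : Set V) :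
    p.Blocked D S ↔ BlockF D S p.vf p.n := by
  constructor
  · rintro ⟨i, h1, h2, h⟩
    refine ⟨i, h1, h2, ?_⟩
    have ec := p.colliderAt_iff_collF D h1 h2
    have ev : p.vf i = p.f ⟨i, by omega⟩ := p.vf_eq (by omega)
    rcases h with ⟨hc, hs⟩ | ⟨hc, hs⟩
    · exact Or.inl ⟨fun c => hc (ec.mpr c), by rw [ev]; exact hs⟩
    · exact Or.inr ⟨ec.mp hc, fun d hd => hs d (by rw [ev] at hd; exact hd)⟩
  · rintro ⟨i, h1, h2, h⟩
    refine ⟨i, h1, h2, ?_⟩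
    have ec := p.colliderAt_iff_collF D h1 h2
    have ev : p.vf i = p.f ⟨i, by omega⟩ := p.vf_eq (by omega)
    rcases h with ⟨hc, hs⟩ | ⟨hc, hs⟩
    · exact Or.inl ⟨fun c => hc (ec.mp c), by rw [← ev]; exact hs⟩
    · exact Or.inr ⟨ec.mpr hc, fun d hd => hs d (by rw [← ev] at hd; exact hd)⟩

end GPath

/-- build a `GPath` from an ℕ-indexed path. -/
def GPath.ofF {A : V → V → Prop} {x y : V} {g : ℕ → V} {n : ℕ}
    (h : IsPathF A x y g n) : GPath A x y where
  n := n
  f := fun i => g i.1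
  inj := by
    intro a b hab
    exact Fin.ext (h.2.2.2 a.1 (by omega) b.1 (by omega) hab)
  first := h.1
  last := h.2.1
  adj := fun i => by
    have := h.2.2.1 i.1 i.2
    simpa using this

lemma GPath.ofF_vf {A : V → V → Prop} {x y : V} {g : ℕ → V} {n : ℕ}
    (h : IsPathF A x y g n) {i : ℕ} (hi : i ≤ n) : (GPath.ofF h).vf i = g i := by
  rw [GPath.vf_eq _ (show i ≤ (GPath.ofF h).n from hi)]
  rfl

lemma Dag.dSep_iff (D : Dag V) (x y : V) (S : Set V) :
    D.dSep x y S ↔ ∀ (n : ℕ) (g : ℕ → V), IsPathF D.Adj x y g n → BlockF D S g n := by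
  constructor
  · intro h n g hg
    have hb := h (GPath.ofF hg)
    rw [GPath.blocked_iff_blockF] at hb
    obtain ⟨i, h1, h2, h3⟩ := hb
    have hn : (GPath.ofF hg).n = n := rfl
    rw [hn] at h2
    refine ⟨i, h1, h2, ?_⟩
    have e : ∀ j ≤ n, (GPath.ofF hg).vf j = g j := fun j hj => GPath.ofF_vf hg hj
    have ec : CollF D (GPath.ofF hg).vf i ↔ CollF D g i := by
      unfold CollF
      rw [e (i-1) (by omega), e i (by omega), e (i+1) (by omega)]
    rw [e i (by omega), ec] at h3
    exact h3
  · intro h p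
    rw [GPath.blocked_iff_blockF]
    exact h p.n p.vf p.vf_isPathF

end Aux
section Aux2

open Classical

variable {V : Type*}

lemma Dag.adj_not_dSep (D : Dag V) {a b : V} (h : D.Adj a b) (S : Set V) :
    ¬ D.dSep a b S := by
  intro hsep
  rw [Dag.dSep_iff] at hsep
  have hab : a ≠ b := D.adj_ne h
  have hp : IsPathF D.Adj a b (fun i => if i = 0 then a else b) 1 := by
    refine ⟨by simp, by simp, ?_, ?_⟩
    · intro i hi
      have : i = 0 := by omega
      subst this
      simpa using h
    · intro i hi j hj hij
      interval_cases i <;> interval_cases j <;> simp_all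
  obtain ⟨i, h1, h2, -⟩ := hsep 1 _ hp
  omega

lemma Dag.isPathF_rev (D : Dag V) {x y : V} {g : ℕ → V} {n : ℕ}
    (h : IsPathF D.Adj x y g n) : IsPathF D.Adj y x (fun i => g (n - i)) n := by
  obtain ⟨h0, hn, hadj, hinj⟩ := h
  refine ⟨by simpa using hn, by simpa using h0, ?_, ?_⟩
  · intro i hi
    have e1 : n - (i + 1) = n - i - 1 := by omega
    have h1 := hadj (n - i - 1) (by omega)
    have e2 : n - i - 1 + 1 = n - i := by omega
    rw [e2] at h1
    simp only [e1]
    exact h1.symm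
  · intro i hi j hj hij
    have := hinj (n - i) (by omega) (n - j) (by omega) hij
    omega

lemma Dag.collF_rev (D : Dag V) (g : ℕ → V) {n i : ℕ} (h1 : 0 < i) (h2 : i < n) :
    CollF D (fun t => g (n - t)) i ↔ CollF D g (n - i) := by
  unfold CollF
  simp only
  rw [show n - (i - 1) = n - i + 1 by omega, show n - (i + 1) = n - i - 1 by omega]
  exact and_comm

lemma Dag.blockF_rev (D : Dag V) (S : Set V) {g : ℕ → V} {n : ℕ}
    (h : BlockF D S (fun i => g (n - i)) n) : BlockF D S g n := by
  obtain ⟨i, h1, h2, hd⟩ := h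
  refine ⟨n - i, by omega, by omega, ?_⟩
  rw [D.collF_rev g h1 h2] at hd
  exact hd

lemma Dag.dSep_symm (D : Dag V) {x y : V} {S : Set V} (h : D.dSep x y S) :
    D.dSep y x S := by
  rw [Dag.dSep_iff] at h ⊢
  intro n g hg
  exact D.blockF_rev S (h n _ (D.isPathF_rev hg))

lemma Dag.chainAnc (D : Dag V) (g : ℕ → V) {a b : ℕ} (hab : a ≤ b)
    (h : ∀ i, a ≤ i → i < b → D.edge (g i) (g (i + 1))) : D.Anc (g a) (g b) := by
  induction b, hab using Nat.le_induction with
  | base => exact D.anc_refl _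
  | succ m hm ih =>
    exact (ih (fun i h1 h2 => h i h1 (by omega))).tail (h m hm (by omega))

lemma Dag.anc_revchain (D : Dag V) (g : ℕ → V) {t n : ℕ} (htn : t ≤ n)
    (h : ∀ i, t ≤ i → i < n → D.edge (g (i + 1)) (g i)) : D.Anc (g n) (g t) := by
  have := D.chainAnc (fun i => g (n - i)) (Nat.zero_le (n - t)) (fun i h1 h2 => by
    have h3 := h (n - i - 1) (by omega) (by omega)
    rw [show n - i - 1 + 1 = n - i by omega] at h3
    show D.edge (g (n - i)) (g (n - (i + 1)))
    rw [show n - (i + 1) = n - i - 1 by omega]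
    exact h3)
  simpa [show n - (n - t) = t by omega] using this

lemma Dag.parent_sep (H : Dag V) {a b : V} (hne : a ≠ b) (hnadj : ¬ H.Adj a b)
    (hnanc : ¬ H.Anc b a) : H.dSep a b (H.Pa b) := by
  rw [Dag.dSep_iff]
  intro n g hg
  obtain ⟨h0, hn, hadj, hinj⟩ := hg
  have hn2 : 2 ≤ n := by
    by_contra hlt
    interval_cases n
    · exact hne (h0 ▸ hn ▸ rfl)
    · exact hnadj (h0 ▸ hn ▸ hadj 0 (by omega))
  by_cases hlast : H.edge (g (n - 1)) (g n)
  · refine ⟨n - 1, by omega, by omega, Or.inl ⟨?_, ?_⟩⟩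
    · rintro ⟨-, hc2⟩
      rw [show n - 1 + 1 = n by omega] at hc2
      exact H.not_edge_both hlast hc2
    · show H.edge (g (n - 1)) b
      rw [← hn]; exact hlast
  · have hback : H.edge (g n) (g (n - 1)) := by
      have h1 := hadj (n - 1) (by omega)
      rw [show n - 1 + 1 = n by omega] at h1
      rcases h1 with h1 | h1
      · exact absurd h1 hlast
      · exact h1
    have hT : ∃ t, ∀ i, t ≤ i → i < n → H.edge (g (i + 1)) (g i) := by
      refine ⟨n - 1, fun i h1 h2 => ?_⟩
      have : i = n - 1 := by omega
      subst this
      rw [show n - 1 + 1 = n by omega]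
      exact hback
    have ht0 := Nat.find_spec hT
    set t0 := Nat.find hT with ht0def
    have ht0n : t0 ≤ n - 1 := Nat.find_min' hT (fun i h1 h2 => by
      have : i = n - 1 := by omega
      subst this
      rw [show n - 1 + 1 = n by omega]
      exact hback)
    have ht0pos : 0 < t0 := by
      rcases Nat.eq_zero_or_pos t0 with h' | h'
      · exfalso
        apply hnanc
        have := H.anc_revchain g (Nat.zero_le n) (fun i h1 h2 => ht0 i (by omega) h2)
        rw [h0, hn] at this
        exact this
      · exact h'
    have hmin := Nat.find_min hT (show t0 - 1 < t0 by omega)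
    push_neg at hmin
    obtain ⟨i, hi1, hi2, hi3⟩ := hmin
    have hieq : i = t0 - 1 := by
      by_contra hne'
      exact hi3 (ht0 i (by omega) hi2)
    subst hieq
    have hfwd : H.edge (g (t0 - 1)) (g t0) := by
      have h1 := hadj (t0 - 1) (by omega)
      rw [show t0 - 1 + 1 = t0 by omega] at h1 hi3
      rcases h1 with h1 | h1
      · exact h1
      · exact absurd h1 hi3
    refine ⟨t0, ht0pos, by omega, Or.inr ⟨⟨hfwd, ht0 t0 (le_refl _) (by omega)⟩, ?_⟩⟩
    intro d hd hdS
    have hbt : H.Anc (g n) (g t0) := H.anc_revchain g (by omega) (fun i h1 h2 => ht0 i h1 h2)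
    have h2 : H.Anc (g n) d := hbt.trans hd
    rw [hn] at h2
    exact H.not_edge_of_anc h2 hdS

lemma Dag.sep_exists (H : Dag V) {a b : V} (hne : a ≠ b) (hnadj : ¬ H.Adj a b) :
    ∃ S, H.dSep a b S := by
  by_cases h : H.Anc b a
  · have h2 : ¬ H.Anc a b := fun h' => hne (H.anc_antisymm h' h)
    exact ⟨H.Pa a, H.dSep_symm (H.parent_sep hne.symm (fun h' => hnadj h'.symm) h2)⟩
  · exact ⟨H.Pa b, H.parent_sep hne hnadj h⟩

lemma Dag.skeleton {D M : Dag V} (hM : D.MEquiv M) {a b : V} (h : D.Adj a b) :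
    M.Adj a b := by
  by_contra hn
  obtain ⟨S, hS⟩ := M.sep_exists (D.adj_ne h) hn
  exact D.adj_not_dSep h S ((hM a b S).mpr hS)

lemma Dag.anc_chain (H : Dag V) {a b : V} (h : H.Anc a b) :
    ∃ (m : ℕ) (c : ℕ → V), c 0 = a ∧ c m = b ∧ ∀ i < m, H.edge (c i) (c (i + 1)) := by
  induction h with
  | refl => exact ⟨0, fun _ => a, rfl, rfl, by omega⟩
  | @tail b' b hab' hb ih =>
    obtain ⟨m, c, h1, h2, h3⟩ := ih
    refine ⟨m + 1, fun i => if i ≤ m then c i else b, by simpa using h1, by simp, ?_⟩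
    intro i hi
    rcases Nat.lt_or_ge i m with h' | h'
    · simp only [if_pos (by omega : i ≤ m), if_pos (by omega : i + 1 ≤ m)]
      exact h3 i h'
    · have : i = m := by omega
      subst this
      simp only [if_pos (le_refl _), if_neg (by omega : ¬ i + 1 ≤ i)]
      rw [h2]
      exact hb

end Aux2
section Aux3

open Classical

variable {V : Type*}

lemma Dag.edge_ne (M : Dag V) {a b : V} (h : M.edge a b) : a ≠ b := by
  rintro rfl; exact M.not_edge_self a h

/-- a two-edge path through a collider whose middle node is in `S` is open. -/
lemma Dag.not_dSep_collider (M : Dag V) {a b c : V} (hab : M.edge a b) (hcb : M.edge c b)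
    (hac : a ≠ c) {S : Set V} (hbS : b ∈ S) : ¬ M.dSep a c S := by
  intro h
  rw [Dag.dSep_iff] at h
  have hab' : a ≠ b := M.edge_ne hab
  have hcb' : c ≠ b := M.edge_ne hcb
  have hp : IsPathF M.Adj a c (fun i => if i = 0 then a else if i = 1 then b else c) 2 := by
    refine ⟨by simp, by simp, ?_, ?_⟩
    · intro i hi
      interval_cases i
      · simpa [Dag.Adj] using Or.inl hab
      · simpa [Dag.Adj] using Or.inr hcb
    · intro i hi j hj hij
      interval_cases i <;> interval_cases j <;> simp_all
  obtain ⟨i, h1, h2, hd⟩ := h 2 _ hp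
  have : i = 1 := by omega
  subst this
  have hcoll : CollF M (fun i => if i = 0 then a else if i = 1 then b else c) 1 := by
    constructor <;> simpa using (by assumption : _)
  rcases hd with ⟨hnc, -⟩ | ⟨-, hall⟩
  · exact hnc hcoll
  · exact hall b (M.anc_refl b) hbS

lemma Dag.not_dSep_collider' (M : Dag V) {a b c : V} (hab : M.edge a b) (hcb : M.edge c b)
    (hac : a ≠ c) {S : Set V} (hbS : b ∈ S) : ¬ M.dSep a c S := M.not_dSep_collider hab hcb hac hbS

/-- unshielded colliders are compelled. -/
lemma Dag.vs_compelled {D M : Dag V} (hM : D.MEquiv M) {a b c : V}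
    (hab : M.edge a b) (hcb : M.edge c b) (hac : a ≠ c) (hnadj : ¬ M.Adj a c) :
    D.CpDir a b := by
  intro D' hD'
  by_contra hne
  have hMD' : M.MEquiv D' := Dag.mequiv_trans (Dag.mequiv_symm hM) hD'
  have hba : D'.edge b a := by
    rcases Dag.skeleton hMD' (Or.inl hab : M.Adj a b) with h | h
    · exact absurd h hne
    · exact h
  have hnadjD' : ¬ D'.Adj a c := fun h' => hnadj (Dag.skeleton (Dag.mequiv_symm hMD') h')
  by_cases hAnc : D'.Anc a c
  · have hCA : ¬ D'.Anc c a := fun h' => hac (D'.anc_antisymm hAnc h')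
    have hsep : D'.dSep a c (D'.Pa c) := D'.parent_sep hac hnadjD' hCA
    rcases Dag.skeleton hMD' (Or.inr hcb : M.Adj b c) with h | h
    · exact M.not_dSep_collider (S := D'.Pa c) hab hcb hac (show b ∈ D'.Pa c from h)
        ((hMD' a c _).mpr hsep)
    · exact hCA ((D'.edge_anc h).tail hba)
  · have hsep : D'.dSep c a (D'.Pa a) :=
      D'.parent_sep (Ne.symm hac) (fun h' => hnadjD' h'.symm) hAnc
    exact M.not_dSep_collider (S := D'.Pa a) hcb hab (Ne.symm hac) (show b ∈ D'.Pa a from hba)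
      ((hMD' c a _).mpr hsep)

lemma Dag.cpdir_witness {D : Dag V} {a b : V} (h : ¬ D.CpDir a b) :
    ∃ M : Dag V, D.MEquiv M ∧ ¬ M.edge a b := by
  unfold Dag.CpDir at h
  push_neg at h
  exact h

/-- Meek-style propagation: a compelled edge `a → b` plus an undirected edge `b − c`
forces `a` and `c` adjacent, with the edge compelled `a → c` or undirected. -/
lemma Dag.r_lemma {D : Dag V} {a b c : V} (h1 : D.CpDir a b) (h2 : D.CpUndir b c) :
    a = c ∨ D.CpDir a c ∨ D.CpUndir a c := by
  by_cases hac : a = c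
  · exact Or.inl hac
  obtain ⟨hadjbc, hnbc, hncb⟩ := h2
  obtain ⟨M1, hM1, hM1e⟩ := Dag.cpdir_witness hnbc
  have hcb1 : M1.edge c b := by
    rcases Dag.skeleton hM1 hadjbc with h | h
    · exact absurd h hM1e
    · exact h
  obtain ⟨M2, hM2, hM2e⟩ := Dag.cpdir_witness hncb
  have hbc2 : M2.edge b c := by
    rcases Dag.skeleton hM2 hadjbc with h | h
    · exact h
    · exact absurd h hM2e
  have hDadj : D.Adj a c := by
    by_contra hnadj
    have hab2 : M2.edge a b := h1 M2 hM2
    have hAnc : M2.Anc a c := (M2.edge_anc hab2).tail hbc2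
    have hnca : ¬ M2.Anc c a := fun h' => hac (M2.anc_antisymm hAnc h')
    have hnadj2 : ¬ M2.Adj a c := fun h' => hnadj (Dag.skeleton (Dag.mequiv_symm hM2) h')
    have hsep : M2.dSep a c (M2.Pa c) := M2.parent_sep hac hnadj2 hnca
    have hab1 : M1.edge a b := h1 M1 hM1
    have h12 : M1.MEquiv M2 := Dag.mequiv_trans (Dag.mequiv_symm hM1) hM2
    exact M1.not_dSep_collider (S := M2.Pa c) hab1 hcb1 hac (show b ∈ M2.Pa c from hbc2)
      ((h12 a c _).mpr hsep)
  rcases hDadj with he | he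
  · rcases D.edge_class he with h | h
    · exact Or.inr (Or.inl h)
    · exact Or.inr (Or.inr h)
  · rcases D.edge_class he with h | h
    · exfalso
      exact M2.acyclic c a (h M2 hM2) ((M2.edge_anc (h1 M2 hM2)).tail hbc2)
    · exact Or.inr (Or.inr (Dag.cpundir_symm h))

end Aux3
section Aux4

open Classical

variable {V : Type*}

lemma isPathF_drop {A : V → V → Prop} {x y : V} {g : ℕ → V} {n : ℕ}
    (hp : IsPathF A x y g n) {k : ℕ} (hk1 : 1 ≤ k) (hk2 : k < n)
    (hadj' : A (g (k - 1)) (g (k + 1))) :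
    IsPathF A x y (fun i => if i < k then g i else g (i + 1)) (n - 1) := by
  obtain ⟨h0, hn, hadj, hinj⟩ := hp
  refine ⟨?_, ?_, ?_, ?_⟩
  · simp only [if_pos (show 0 < k by omega)]; exact h0
  · simp only [if_neg (show ¬ n - 1 < k by omega), show n - 1 + 1 = n by omega]; exact hn
  · intro i hi
    by_cases hc1 : i + 1 < k
    · simp only [if_pos (show i < k by omega), if_pos hc1]
      exact hadj i (by omega)
    · by_cases hc2 : i + 1 = k
      · simp only [if_pos (show i < k by omega), if_neg (show ¬ i + 1 < k by omega)]
        have e1 : i = k - 1 := by omega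
        have e2 : i + 1 + 1 = k + 1 := by omega
        rw [e2, e1]
        exact hadj'
      · simp only [if_neg (show ¬ i < k by omega), if_neg (show ¬ i + 1 < k by omega)]
        exact hadj (i + 1) (by omega)
  · intro i hi j hj hij
    by_cases hc1 : i < k <;> by_cases hc2 : j < k <;>
      simp only [if_pos, if_neg, hc1, hc2, if_true, if_false] at hij
    · exact hinj i (by omega) j (by omega) hij
    · have := hinj i (by omega) (j + 1) (by omega) hij; omega
    · have := hinj (i + 1) (by omega) j (by omega) hij; omega
    · have := hinj (i + 1) (by omega) (j + 1) (by omega) hij; omega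

lemma isPathF_cut {A : V → V → Prop} {x y : V} {g : ℕ → V} {n : ℕ}
    (hp : IsPathF A x y g n) {k : ℕ} (hk1 : 1 ≤ k) (hk2 : k ≤ n)
    (hadj' : A x (g k)) :
    IsPathF A x y (fun i => if i = 0 then x else g (i + k - 1)) (n - k + 1) := by
  obtain ⟨h0, hn, hadj, hinj⟩ := hp
  refine ⟨by simp, ?_, ?_, ?_⟩
  · simp only [if_neg (show ¬ n - k + 1 = 0 by omega), show n - k + 1 + k - 1 = n by omega]
    exact hn
  · intro i hi
    by_cases hc : i = 0
    · subst hc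
      simp only [if_pos rfl, if_neg (show ¬ (0:ℕ) + 1 = 0 by omega),
        show 0 + 1 + k - 1 = k by omega]
      exact hadj'
    · simp only [if_neg hc, if_neg (show ¬ i + 1 = 0 by omega)]
      have e : i + 1 + k - 1 = (i + k - 1) + 1 := by omega
      rw [e]
      exact hadj (i + k - 1) (by omega)
  · intro i hi j hj hij
    by_cases hc1 : i = 0 <;> by_cases hc2 : j = 0 <;>
      simp only [hc1, hc2, if_pos, if_neg, if_true, if_false] at hij <;> try omega
    · rw [← h0] at hij
      have := hinj 0 (by omega) (j + k - 1) (by omega) hij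
      omega
    · rw [← h0] at hij
      have := hinj (i + k - 1) (by omega) 0 (by omega) hij
      omega
    · have := hinj (i + k - 1) (by omega) (j + k - 1) (by omega) hij
      omega

lemma Dag.mem_S_iff (D : Dag V) (X w : V) :
    w ∈ (D.CpPa X ∪ D.CpSib X) ↔ D.CpDir w X ∨ D.CpUndir X w := by
  simp [Dag.CpPa, Dag.CpSib, Set.mem_union, Set.mem_setOf_eq]

/-- a member of S that is a descendant of X must be an (undirected) sibling,
with the D-edge pointing out of X. -/
lemma Dag.sib_of_desc (D : Dag V) {X w : V} (hAnc : D.Anc X w)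
    (h : w ∈ (D.CpPa X ∪ D.CpSib X)) : D.CpUndir X w ∧ D.edge X w := by
  rw [D.mem_S_iff] at h
  rcases h with h | h
  · exact absurd hAnc (D.acyclic w X (Dag.cpdir_edge h))
  · refine ⟨h, ?_⟩
    rcases h.1 with he | he
    · exact he
    · exact absurd hAnc (D.acyclic w X he)

/-- forward direction: an explicitly directed path is open given `Pa ∪ Sib`. -/
lemma Dag.explAn_not_dSep {D : Dag V} {X Y : V} (hE : D.ExplAn X Y) :
    ¬ D.dSep X Y (D.CpPa X ∪ D.CpSib X) := by
  obtain ⟨p, hdir⟩ := hE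
  intro hsep
  rw [Dag.dSep_iff] at hsep
  have hp := p.vf_isPathF
  set g := p.vf with hg
  set n := p.n with hnn
  have hcp : ∀ i < n, D.CpDir (g i) (g (i + 1)) := by
    intro i hi
    have h1 := hdir ⟨i, hi⟩
    rw [hg, p.vf_eq (show i ≤ p.n by omega), p.vf_eq (show i + 1 ≤ p.n by omega)]
    have e1 : (⟨i, Nat.lt_succ_of_le (by omega)⟩ : Fin (p.n + 1)) = (Fin.castSucc ⟨i, hi⟩) :=
      Fin.ext (by simp)
    have e2 : (⟨i + 1, Nat.lt_succ_of_le (by omega)⟩ : Fin (p.n + 1)) = (Fin.succ ⟨i, hi⟩) :=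
      Fin.ext (by simp)
    rw [e1, e2]; exact h1
  have hedge : ∀ i < n, D.edge (g i) (g (i + 1)) := fun i hi => Dag.cpdir_edge (hcp i hi)
  obtain ⟨h0, hn, hadj, hinj⟩ := hp
  have hAncX : ∀ i ≤ n, D.Anc X (g i) := by
    intro i hi
    have := D.chainAnc g (Nat.zero_le i) (fun t h1 h2 => hedge t (by omega))
    rwa [h0] at this
  have hnsib : ∀ i, 1 ≤ i → i ≤ n → ¬ D.CpUndir X (g i) := by
    intro i
    induction i with
    | zero => omega
    | succ k ih =>
      intro h1 h2 hu
      rcases Nat.eq_zero_or_pos k with rfl | hk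
      · have := hcp 0 (by omega)
        rw [h0] at this
        exact hu.2.1 this
      · have hcpk := hcp k (by omega)
        rw [show k + 1 = k + 1 from rfl] at hcpk
        have hr := Dag.r_lemma hcpk (Dag.cpundir_symm hu)
        rcases hr with he | he | he
        · have := hinj k (by omega) 0 (by omega) (by rw [h0]; exact he)
          omega
        · exact D.acyclic _ _ (Dag.cpdir_edge he) (hAncX k (by omega))
        · exact ih (by omega) (by omega) (Dag.cpundir_symm he)
  obtain ⟨i, h1, h2, hd⟩ := hsep n g ⟨h0, hn, hadj, hinj⟩
  have hnc : ¬ CollF D g i := by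
    rintro ⟨-, hc2⟩
    exact D.not_edge_both (hedge i (by omega)) hc2
  rcases hd with ⟨-, hs⟩ | ⟨hc, -⟩
  · rw [D.mem_S_iff] at hs
    rcases hs with hpa | hsib
    · exact D.acyclic _ _ (Dag.cpdir_edge hpa) (hAncX i (by omega))
    · exact hnsib i (by omega) (by omega) hsib
  · exact hnc hc

/-- there is no fully `D`-directed open path when `X` is not an explicit ancestor. -/
lemma Dag.no_directed_open {D : Dag V} {X Y : V} (hnadj : ¬ D.Adj X Y) (hXY : X ≠ Y)
    (hnE : ¬ D.ExplAn X Y) :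
    ∀ (n : ℕ) (g : ℕ → V), IsPathF D.Adj X Y g n →
      (∀ i < n, D.edge (g i) (g (i + 1))) →
      (∀ i, 0 < i → i < n → g i ∉ (D.CpPa X ∪ D.CpSib X)) → False := by
  intro n
  induction n using Nat.strong_induction_on with
  | _ n ih =>
  intro g hp hdir hS
  obtain ⟨h0, hn, hadj, hinj⟩ := hp
  have hn2 : 2 ≤ n := by
    by_contra hlt
    interval_cases n
    · exact hXY (h0 ▸ hn ▸ rfl)
    · exact hnadj (h0 ▸ hn ▸ hadj 0 (by omega))
  by_cases hall : ∀ i < n, D.CpDir (g i) (g (i + 1))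
  · apply hnE
    refine ⟨GPath.ofF ⟨h0, hn, hadj, hinj⟩, ?_⟩
    intro i
    have := hall i.1 i.2
    exact this
  · push_neg at hall
    have hex : ∃ i, i < n ∧ ¬ D.CpDir (g i) (g (i + 1)) := by
      obtain ⟨i, h1, h2⟩ := hall; exact ⟨i, h1, h2⟩
    set k := Nat.find hex with hkdef
    obtain ⟨hkn, hknd⟩ := Nat.find_spec hex
    have hkmin : ∀ i, i < k → i < n → D.CpDir (g i) (g (i + 1)) := by
      intro i h1 h2
      by_contra hc
      exact Nat.find_min hex h1 ⟨h2, hc⟩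
    have hundir : D.CpUndir (g k) (g (k + 1)) := by
      rcases D.edge_class (hdir k hkn) with h | h
      · exact absurd h hknd
      · exact h
    rcases Nat.eq_zero_or_pos k with hk0 | hkpos
    · apply hS 1 (by omega) (by omega)
      rw [D.mem_S_iff]
      refine Or.inr ?_
      rw [hk0] at hundir
      rw [← h0]
      simpa using hundir
    · have hcpk : D.CpDir (g (k - 1)) (g k) := by
        have := hkmin (k - 1) (by omega) (by omega)
        rwa [show k - 1 + 1 = k by omega] at this
      have hnew : D.edge (g (k - 1)) (g (k + 1)) := by
        have hrtg : D.Anc (g (k - 1)) (g (k + 1)) := by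
          have e1 := hdir (k - 1) (by omega)
          rw [show k - 1 + 1 = k by omega] at e1
          exact (D.edge_anc e1).tail (hdir k hkn)
        rcases Dag.r_lemma hcpk hundir with he | he | he
        · exfalso
          have := hinj (k - 1) (by omega) (k + 1) (by omega) he
          omega
        · exact Dag.cpdir_edge he
        · rcases he.1 with h' | h'
          · exact h'
          · exact absurd hrtg (D.acyclic _ _ h')
      have hp' : IsPathF D.Adj X Y (fun i => if i < k then g i else g (i + 1)) (n - 1) :=
        isPathF_drop ⟨h0, hn, hadj, hinj⟩ hkpos hkn (Or.inl hnew)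
      apply ih (n - 1) (by omega) _ hp'
      · intro i hi
        by_cases hc1 : i + 1 < k
        · simp only [if_pos (show i < k by omega), if_pos hc1]
          exact hdir i (by omega)
        · by_cases hc2 : i + 1 = k
          · simp only [if_pos (show i < k by omega), if_neg (show ¬ i + 1 < k by omega)]
            rw [show i + 1 + 1 = k + 1 by omega, show i = k - 1 by omega]
            exact hnew
          · simp only [if_neg (show ¬ i < k by omega), if_neg (show ¬ i + 1 < k by omega)]
            exact hdir (i + 1) (by omega)
      · intro i h1 h2
        by_cases hc : i < k
        · simp only [if_pos hc]
          exact hS i h1 (by omega)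
        · simp only [if_neg hc]
          exact hS (i + 1) (by omega) (by omega)

end Aux4
section Aux5

open Classical

variable {V : Type*}

def dropF (g : ℕ → V) (k : ℕ) : ℕ → V := fun i => if i < k then g i else g (i + 1)

def cutF (X : V) (g : ℕ → V) (k : ℕ) : ℕ → V := fun i => if i = 0 then X else g (i + k - 1)

lemma collF_dropF_low (D : Dag V) (g : ℕ → V) {k i : ℕ} (h : i + 1 < k) :
    CollF D (dropF g k) i ↔ CollF D g i := by
  unfold CollF dropF
  rw [if_pos (show i - 1 < k by omega), if_pos (show i < k by omega), if_pos h]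

lemma collF_dropF_high (D : Dag V) (g : ℕ → V) {k i : ℕ} (hk : 0 < k) (h : k + 1 ≤ i) :
    CollF D (dropF g k) i ↔ CollF D g (i + 1) := by
  unfold CollF dropF
  rw [if_neg (show ¬ i - 1 < k by omega), if_neg (show ¬ i < k by omega),
    if_neg (show ¬ i + 1 < k by omega), show i - 1 + 1 = i + 1 - 1 by omega]

lemma collF_cutF_high (D : Dag V) (X : V) (g : ℕ → V) {k i : ℕ} (hk : 1 ≤ k) (h : 2 ≤ i) :
    CollF D (cutF X g k) i ↔ CollF D g (i + k - 1) := by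
  unfold CollF cutF
  rw [if_neg (show ¬ i - 1 = 0 by omega), if_neg (show ¬ i = 0 by omega),
    if_neg (show ¬ i + 1 = 0 by omega), show i - 1 + k - 1 = i + k - 1 - 1 by omega,
    show i + 1 + k - 1 = i + k - 1 + 1 by omega]

/-- pointwise openness of a path. -/
def OpenPt (D : Dag V) (S : Set V) (g : ℕ → V) (N : ℕ) : Prop :=
  ∀ i, 0 < i → i < N →
    (¬ CollF D g i → g i ∉ S) ∧ (CollF D g i → ∃ d, D.Anc (g i) d ∧ d ∈ S)

lemma not_blockF_of_openPt {D : Dag V} {S : Set V} {g : ℕ → V} {N : ℕ}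
    (h : OpenPt D S g N) : ¬ BlockF D S g N := by
  rintro ⟨i, h1, h2, hd⟩
  rcases hd with ⟨hnc, hs⟩ | ⟨hc, hall⟩
  · exact (h i h1 h2).1 hnc hs
  · obtain ⟨d, hda, hds⟩ := (h i h1 h2).2 hc
    exact hall d hda hds

lemma openPt_of_not_blockF {D : Dag V} {S : Set V} {g : ℕ → V} {N : ℕ}
    (h : ¬ BlockF D S g N) : OpenPt D S g N := by
  intro i h1 h2
  constructor
  · intro hnc hs
    exact h ⟨i, h1, h2, Or.inl ⟨hnc, hs⟩⟩
  · intro hc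
    by_contra hnd
    push_neg at hnd
    exact h ⟨i, h1, h2, Or.inr ⟨hc, fun d hd => hnd d hd⟩⟩

/-- transfer of openness across `cutF`. -/
lemma openPt_cutF {D : Dag V} {S : Set V} {X Y : V} {g : ℕ → V} {N : ℕ}
    (hOP : OpenPt D S g N) {k : ℕ} (hk1 : 1 ≤ k) (hkN : k < N)
    (hXk : D.edge X (g k))
    (hwit : D.edge (g (k + 1)) (g k) → ∃ d, D.Anc (g k) d ∧ d ∈ S)
    (hnotS : ¬ D.edge (g (k + 1)) (g k) → g k ∉ S) :
    OpenPt D S (cutF X g k) (N - k + 1) := by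
  intro i h1 h2
  by_cases hi1 : i = 1
  · subst hi1
    have hnode : cutF X g k 1 = g k := by
      unfold cutF; rw [if_neg (by omega : ¬ (1:ℕ) = 0), show 1 + k - 1 = k by omega]
    have hc1 : D.edge (cutF X g k 0) (cutF X g k 1) := by
      unfold cutF; rw [if_pos rfl, if_neg (by omega : ¬ (1:ℕ) = 0), show 1 + k - 1 = k by omega]
      exact hXk
    have hc2e : cutF X g k 2 = g (k + 1) := by
      unfold cutF; rw [if_neg (by omega : ¬ (2:ℕ) = 0), show 2 + k - 1 = k + 1 by omega]
    by_cases hb : D.edge (g (k + 1)) (g k)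
    · have hcoll : CollF D (cutF X g k) 1 := by
        refine ⟨hc1, ?_⟩
        rw [hc2e, hnode]
        exact hb
      refine ⟨fun hnc => absurd hcoll hnc, fun _ => ?_⟩
      rw [hnode]
      exact hwit hb
    · have hncoll : ¬ CollF D (cutF X g k) 1 := by
        rintro ⟨-, hc2⟩
        rw [hc2e, hnode] at hc2
        exact hb hc2
      refine ⟨fun _ => ?_, fun hc => absurd hc hncoll⟩
      rw [hnode]
      exact hnotS hb
  · have hi2 : 2 ≤ i := by omega
    have hnode : cutF X g k i = g (i + k - 1) := by
      unfold cutF; rw [if_neg (by omega : ¬ i = 0)]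
    have hcorr := collF_cutF_high D X g hk1 hi2
    have hb := hOP (i + k - 1) (by omega) (by omega)
    rw [hnode, hcorr]
    exact hb

/-- transfer of openness across `dropF`. -/
lemma openPt_dropF {D : Dag V} {S : Set V} {g : ℕ → V} {N : ℕ}
    (hOP : OpenPt D S g N) {k : ℕ} (hk1 : 1 ≤ k) (hkN : k < N)
    (hB1 : 1 ≤ k - 1 →
      ((CollF D (dropF g k) (k - 1) → ∃ d, D.Anc (g (k - 1)) d ∧ d ∈ S) ∧
       (¬ CollF D (dropF g k) (k - 1) → g (k - 1) ∉ S)))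
    (hB2 : k < N - 1 →
      ((CollF D (dropF g k) k → ∃ d, D.Anc (g (k + 1)) d ∧ d ∈ S) ∧
       (¬ CollF D (dropF g k) k → g (k + 1) ∉ S))) :
    OpenPt D S (dropF g k) (N - 1) := by
  intro i h1 h2
  by_cases hc1 : i + 1 < k
  · have hnode : dropF g k i = g i := if_pos (by omega)
    have hcorr := collF_dropF_low D g hc1
    rw [hnode, hcorr]
    exact hOP i h1 (by omega)
  · by_cases hc2 : i = k - 1
    · have hkk : 1 ≤ k - 1 := by omega
      have hnode : dropF g k (k - 1) = g (k - 1) := if_pos (by omega)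
      rw [hc2, hnode]
      exact ⟨(hB1 hkk).2, (hB1 hkk).1⟩
    · by_cases hc3 : i = k
      · have hkk : k < N - 1 := by omega
        have hnode : dropF g k k = g (k + 1) := if_neg (by omega)
        rw [hc3, hnode]
        exact ⟨(hB2 hkk).2, (hB2 hkk).1⟩
      · have hik : k + 1 ≤ i := by omega
        have hnode : dropF g k i = g (i + 1) := if_neg (by omega)
        have hcorr := collF_dropF_high D g (by omega) hik
        rw [hnode, hcorr]
        exact hOP (i + 1) (by omega) (by omega)

lemma isPathF_dropF {A : V → V → Prop} {x y : V} {g : ℕ → V} {n : ℕ}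
    (hp : IsPathF A x y g n) {k : ℕ} (hk1 : 1 ≤ k) (hk2 : k < n)
    (hadj' : A (g (k - 1)) (g (k + 1))) : IsPathF A x y (dropF g k) (n - 1) :=
  isPathF_drop hp hk1 hk2 hadj'

lemma isPathF_cutF {A : V → V → Prop} {x y : V} {g : ℕ → V} {n : ℕ}
    (hp : IsPathF A x y g n) {k : ℕ} (hk1 : 1 ≤ k) (hk2 : k ≤ n)
    (hadj' : A x (g k)) : IsPathF A x y (cutF x g k) (n - k + 1) :=
  isPathF_cut hp hk1 hk2 hadj'

end Aux5
section Aux6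

open Classical

variable {V : Type*}

lemma Dag.main_sep {D : Dag V} {X Y : V} (hXY : X ≠ Y) (hnadj : ¬ D.Adj X Y)
    (hnE : ¬ D.ExplAn X Y) : D.dSep X Y (D.CpPa X ∪ D.CpSib X) := by
  classical
  rw [Dag.dSep_iff]
  by_contra hcon
  push_neg at hcon
  obtain ⟨n0, g0, hp0, hb0⟩ := hcon
  have hex : ∃ n, ∃ g, IsPathF D.Adj X Y g n ∧ ¬ BlockF D (D.CpPa X ∪ D.CpSib X) g n :=
    ⟨n0, g0, hp0, hb0⟩
  set N := Nat.find hex with hNdef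
  obtain ⟨g, hpg, hopen⟩ := Nat.find_spec hex
  rw [← hNdef] at hpg hopen
  have hmin : ∀ n' < N, ∀ g', IsPathF D.Adj X Y g' n' →
      BlockF D (D.CpPa X ∪ D.CpSib X) g' n' := by
    intro n' h1 g' h2
    by_contra hcc
    exact Nat.find_min hex h1 ⟨g', h2, hcc⟩
  obtain ⟨h0, hn, hadj, hinj⟩ := hpg
  have hOP : OpenPt D (D.CpPa X ∪ D.CpSib X) g N := openPt_of_not_blockF hopen
  have hN2 : 2 ≤ N := by
    by_contra hlt
    interval_cases N
    · exact hXY (h0 ▸ hn ▸ rfl)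
    · exact hnadj (h0 ▸ hn ▸ hadj 0 (by omega))
  have hfirst : D.edge X (g 1) := by
    have h1 := hadj 0 (by omega)
    rw [h0] at h1
    rcases h1 with he | he
    · exact he
    · exfalso
      have hmem : g 1 ∈ D.CpPa X ∪ D.CpSib X := by
        rw [D.mem_S_iff]
        rcases D.edge_class he with h' | h'
        · exact Or.inl h'
        · exact Or.inr (Dag.cpundir_symm h')
      have hnc : ¬ CollF D g 1 := by
        rintro ⟨hc1, -⟩
        have hc1' : D.edge (g 0) (g 1) := hc1
        rw [h0] at hc1'
        exact D.not_edge_both hc1' he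
      exact (hOP 1 (by omega) (by omega)).1 hnc hmem
  by_cases hcoll : ∃ i, 0 < i ∧ i < N ∧ CollF D g i
  case neg =>
    have hnS : ∀ i, 0 < i → i < N → g i ∉ D.CpPa X ∪ D.CpSib X := fun i h1 h2 =>
      (hOP i h1 h2).1 (fun hc => hcoll ⟨i, h1, h2, hc⟩)
    have hdirAll : ∀ i, i < N → D.edge (g i) (g (i + 1)) := by
      intro i
      induction i with
      | zero => intro _; rw [h0]; exact hfirst
      | succ t ih =>
        intro hk
        have hprev := ih (by omega)
        rcases hadj (t + 1) (by omega) with he | he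
        · exact he
        · exact absurd ⟨(show D.edge (g (t + 1 - 1)) (g (t + 1)) from hprev), he⟩
            (fun hcf => hcoll ⟨t + 1, by omega, by omega, hcf⟩)
    exact D.no_directed_open hnadj hXY hnE N g ⟨h0, hn, hadj, hinj⟩ hdirAll
      (fun i h1 h2 => hnS i h1 h2)
  case pos =>
    set j := Nat.find hcoll with hjdef
    obtain ⟨hj0, hjN, hjcoll⟩ := Nat.find_spec hcoll
    rw [← hjdef] at hj0 hjN hjcoll
    have hjmin : ∀ i, 0 < i → i < j → ¬ CollF D g i := fun i h1 h2 hc =>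
      Nat.find_min hcoll h2 ⟨h1, by omega, hc⟩
    have hback : D.edge (g (j + 1)) (g j) := hjcoll.2
    have hpre : ∀ i, i < j → D.edge (g i) (g (i + 1)) := by
      intro i
      induction i with
      | zero => intro _; rw [h0]; exact hfirst
      | succ t ih =>
        intro hk
        have hprev := ih (by omega)
        rcases hadj (t + 1) (by omega) with he | he
        · exact he
        · exact absurd ⟨(show D.edge (g (t + 1 - 1)) (g (t + 1)) from hprev), he⟩
            (hjmin (t + 1) (by omega) (by omega))
    have hAncpre : ∀ i ≤ j, D.Anc X (g i) := by
      intro i hi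
      have := D.chainAnc g (Nat.zero_le i) (fun t h1 h2 => hpre t (by omega))
      rwa [h0] at this
    obtain ⟨d0, hd0a, hd0s⟩ := (hOP j hj0 hjN).2 hjcoll
    have hchainEx : ∃ m, ∃ c : ℕ → V, c 0 = g j ∧ (∀ i < m, D.edge (c i) (c (i + 1))) ∧
        c m ∈ D.CpPa X ∪ D.CpSib X := by
      obtain ⟨m', c', hc0', hcm', hce'⟩ := D.anc_chain hd0a
      exact ⟨m', c', hc0', hce', by rw [hcm']; exact hd0s⟩
    set m := Nat.find hchainEx with hmdef
    obtain ⟨c, hc0, hce, hcS⟩ := Nat.find_spec hchainEx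
    rw [← hmdef] at hce hcS
    have hmmin : ∀ m' < m, ∀ c' : ℕ → V, c' 0 = g j →
        (∀ i < m', D.edge (c' i) (c' (i + 1))) → c' m' ∉ D.CpPa X ∪ D.CpSib X :=
      fun m' h1 c' h2 h3 h4 => Nat.find_min hchainEx h1 ⟨c', h2, h3, h4⟩
    have hcint : ∀ i < m, c i ∉ D.CpPa X ∪ D.CpSib X := fun i hi hiS =>
      hmmin i hi c hc0 (fun t ht => hce t (by omega)) hiS
    have hAncChain : ∀ i ≤ m, D.Anc (g j) (c i) := by
      intro i hi
      have := D.chainAnc c (Nat.zero_le i) (fun t h1 h2 => hce t (by omega))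
      rwa [hc0] at this
    have hAncXc : ∀ i ≤ m, D.Anc X (c i) := fun i hi =>
      (hAncpre j le_rfl).trans (hAncChain i hi)
    rcases Nat.eq_zero_or_pos m with hm0 | hmpos
    · -- m = 0 : the collider itself is in S
      have hgjS : g j ∈ D.CpPa X ∪ D.CpSib X := by
        rw [hm0] at hcS
        rwa [hc0] at hcS
      obtain ⟨hsibgj, hXgj⟩ := D.sib_of_desc (hAncpre j le_rfl) hgjS
      rcases eq_or_lt_of_le (show 1 ≤ j from hj0) with heq1 | hj2
      · -- j = 1
        have hj1 : j = 1 := heq1.symm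
        have hback2 : D.edge (g 2) (g 1) := by rw [hj1] at hback; exact hback
        have hg1S : g 1 ∈ D.CpPa X ∪ D.CpSib X := by rw [hj1] at hgjS; exact hgjS
        have hsib1 : D.CpUndir X (g 1) := by rw [hj1] at hsibgj; exact hsibgj
        by_cases hadjXz : D.Adj X (g 2)
        · rcases hadjXz with hxz | hzx
          · -- X → g 2 : cut at 2
            have hN3 : 3 ≤ N := by
              by_contra h'
              have h2' : (2:ℕ) = N := by omega
              apply hnadj
              have : D.Adj X (g 2) := Or.inl hxz
              rw [h2', hn] at this
              exact this
            have hwit : D.edge (g (2 + 1)) (g 2) → ∃ d, D.Anc (g 2) d ∧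
                d ∈ D.CpPa X ∪ D.CpSib X :=
              fun _ => ⟨g 1, D.edge_anc hback2, hg1S⟩
            have hnotS : ¬ D.edge (g (2 + 1)) (g 2) → g 2 ∉ D.CpPa X ∪ D.CpSib X := fun _ =>
              (hOP 2 (by omega) (by omega)).1
                (fun hcf => D.not_edge_both (show D.edge (g 1) (g 2) from hcf.1) hback2)
            have hpath' := isPathF_cutF ⟨h0, hn, hadj, hinj⟩ (show 1 ≤ 2 by omega)
              (show 2 ≤ N by omega) (Or.inl hxz)
            have hopen' := openPt_cutF (Y := Y) hOP (show 1 ≤ 2 by omega)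
              (show 2 < N by omega) hxz hwit hnotS
            exact not_blockF_of_openPt hopen' (hmin (N - 2 + 1) (by omega) _ hpath')
          · -- g 2 → X : g 2 ∈ S but open
            have hzY : 2 < N := by
              by_contra h'
              have h2' : (2:ℕ) = N := by omega
              apply hnadj
              have : D.Adj X (g 2) := Or.inr hzx
              rw [h2', hn] at this
              exact this
            have hzS : g 2 ∈ D.CpPa X ∪ D.CpSib X := by
              rw [D.mem_S_iff]
              rcases D.edge_class hzx with h' | h'
              · exact Or.inl h'
              · exact Or.inr (Dag.cpundir_symm h')
            have hznc : ¬ CollF D g 2 := fun hcf =>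
              D.not_edge_both (show D.edge (g 1) (g 2) from hcf.1) hback2
            exact (hOP 2 (by omega) hzY).1 hznc hzS
        · -- unshielded collider at g 1 : compelled, contradiction with sibling
          have hXz : X ≠ g 2 := by
            intro he
            have : g 0 = g 2 := by rw [h0]; exact he
            have := hinj 0 (by omega) 2 (by omega) this
            omega
          exact hsib1.2.1
            (Dag.vs_compelled (D.mequiv_refl) hfirst hback2 hXz hadjXz)
      · -- j ≥ 2 : cut at j, strictly shorter
        have hwit : D.edge (g (j + 1)) (g j) → ∃ d, D.Anc (g j) d ∧
            d ∈ D.CpPa X ∪ D.CpSib X := fun _ => ⟨g j, D.anc_refl _, hgjS⟩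
        have hnotS : ¬ D.edge (g (j + 1)) (g j) → g j ∉ D.CpPa X ∪ D.CpSib X :=
          fun hnb => absurd hback hnb
        have hpath' := isPathF_cutF ⟨h0, hn, hadj, hinj⟩ (show 1 ≤ j by omega)
          (le_of_lt hjN) (Or.inl hXgj)
        have hopen' := openPt_cutF (Y := Y) hOP (show 1 ≤ j by omega) hjN hXgj hwit hnotS
        exact not_blockF_of_openPt hopen' (hmin (N - j + 1) (by omega) _ hpath')
    · -- m ≥ 1
      have hgjnS : g j ∉ D.CpPa X ∪ D.CpSib X := by
        have := hcint 0 hmpos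
        rwa [hc0] at this
      have hpreCp : ∀ i, i < j → D.CpDir (g i) (g (i + 1)) := by
        by_contra hcp
        push_neg at hcp
        obtain ⟨k0, hk0j, hk0n⟩ := hcp
        have hexk : ∃ k, k < j ∧ ¬ D.CpDir (g k) (g (k + 1)) := ⟨k0, hk0j, hk0n⟩
        set k := Nat.find hexk with hkdef
        obtain ⟨hkj, hknd⟩ := Nat.find_spec hexk
        have hkmin : ∀ i, i < k → i < j → D.CpDir (g i) (g (i + 1)) := fun i h1 h2 => by
          by_contra hcc
          exact Nat.find_min hexk h1 ⟨h2, hcc⟩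
        have hundir : D.CpUndir (g k) (g (k + 1)) := by
          rcases D.edge_class (hpre k hkj) with h' | h'
          · exact absurd h' hknd
          · exact h'
        rcases Nat.eq_zero_or_pos k with hk0 | hkpos
        · have hmem : g 1 ∈ D.CpPa X ∪ D.CpSib X := by
            rw [D.mem_S_iff]
            refine Or.inr ?_
            rw [hk0] at hundir
            rw [h0] at hundir
            exact hundir
          rcases eq_or_lt_of_le (show 1 ≤ j from hj0) with heq1 | hj2
          · have : g j ∈ D.CpPa X ∪ D.CpSib X := by rw [← heq1]; exact hmem
            exact hgjnS this
          · exact (hOP 1 (by omega) (by omega)).1 (hjmin 1 (by omega) hj2) hmem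
        · have hcpk : D.CpDir (g (k - 1)) (g k) := by
            have := hkmin (k - 1) (by omega) (by omega)
            rwa [show k - 1 + 1 = k by omega] at this
          have hnew : D.edge (g (k - 1)) (g (k + 1)) := by
            have hrtg : D.Anc (g (k - 1)) (g (k + 1)) := by
              have e1 := hpre (k - 1) (by omega)
              rw [show k - 1 + 1 = k by omega] at e1
              exact (D.edge_anc e1).tail (hpre k hkj)
            rcases Dag.r_lemma hcpk hundir with he | he | he
            · exfalso
              have := hinj (k - 1) (by omega) (k + 1) (by omega) he
              omega
            · exact Dag.cpdir_edge he
            · rcases he.1 with h' | h'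
              · exact h'
              · exact absurd hrtg (D.acyclic _ _ h')
          have hpath' := isPathF_dropF ⟨h0, hn, hadj, hinj⟩ (show 1 ≤ k by omega)
            (show k < N by omega) (Or.inl hnew)
          have hB1 : 1 ≤ k - 1 →
              ((CollF D (dropF g k) (k - 1) → ∃ d, D.Anc (g (k - 1)) d ∧
                d ∈ D.CpPa X ∪ D.CpSib X) ∧
               (¬ CollF D (dropF g k) (k - 1) → g (k - 1) ∉ D.CpPa X ∪ D.CpSib X)) := by
            intro hkk
            constructor
            · intro hcf
              exfalso
              have h2' := hcf.2
              rw [show k - 1 + 1 = k by omega] at h2'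
              rw [show dropF g k k = g (k + 1) from if_neg (by omega),
                show dropF g k (k - 1) = g (k - 1) from if_pos (by omega)] at h2'
              exact D.not_edge_both hnew h2'
            · intro _
              exact (hOP (k - 1) (by omega) (by omega)).1
                (hjmin (k - 1) (by omega) (by omega))
          have hB2 : k < N - 1 →
              ((CollF D (dropF g k) k → ∃ d, D.Anc (g (k + 1)) d ∧
                d ∈ D.CpPa X ∪ D.CpSib X) ∧
               (¬ CollF D (dropF g k) k → g (k + 1) ∉ D.CpPa X ∪ D.CpSib X)) := by
            intro _
            constructor
            · intro hcf
              have h2' := hcf.2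
              rw [show dropF g k (k + 1) = g (k + 2) from if_neg (by omega),
                show dropF g k k = g (k + 1) from if_neg (by omega)] at h2'
              refine (hOP (k + 1) (by omega) (by omega)).2 ⟨?_, ?_⟩
              · rw [show k + 1 - 1 = k by omega]
                exact hpre k hkj
              · exact h2'
            · intro hnc
              refine (hOP (k + 1) (by omega) (by omega)).1 (fun hcf => hnc ⟨?_, ?_⟩)
              · rw [show dropF g k k = g (k + 1) from if_neg (by omega),
                  show dropF g k (k - 1) = g (k - 1) from if_pos (by omega)]
                exact hnew
              · rw [show dropF g k (k + 1) = g (k + 2) from if_neg (by omega),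
                  show dropF g k k = g (k + 1) from if_neg (by omega)]
                exact hcf.2
          exact not_blockF_of_openPt
            (openPt_dropF hOP (show 1 ≤ k by omega) (show k < N by omega) hB1 hB2)
            (hmin (N - 1) (by omega) _ hpath')
      -- z0 := g (j+1)
      by_cases hadjXz : D.Adj X (g (j + 1))
      · have hjY : j + 1 < N := by
          by_contra h'
          have h2' : j + 1 = N := by omega
          apply hnadj
          have := hadjXz
          rw [h2', hn] at this
          exact this
        rcases hadjXz with hxz | hzx
        · have hwit : D.edge (g (j + 1 + 1)) (g (j + 1)) → ∃ d, D.Anc (g (j + 1)) d ∧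
              d ∈ D.CpPa X ∪ D.CpSib X :=
            fun _ => ⟨c m, (D.edge_anc hback).trans (hAncChain m le_rfl), hcS⟩
          have hnotS : ¬ D.edge (g (j + 1 + 1)) (g (j + 1)) →
              g (j + 1) ∉ D.CpPa X ∪ D.CpSib X := fun _ =>
            (hOP (j + 1) (by omega) hjY).1
              (fun hcf => D.not_edge_both (show D.edge (g j) (g (j + 1)) from hcf.1) hback)
          have hpath' := isPathF_cutF ⟨h0, hn, hadj, hinj⟩ (show 1 ≤ j + 1 by omega)
            (le_of_lt hjY) (Or.inl hxz)
          have hopen' := openPt_cutF (Y := Y) hOP (show 1 ≤ j + 1 by omega) hjY hxz hwit hnotS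
          exact not_blockF_of_openPt hopen' (hmin (N - (j + 1) + 1) (by omega) _ hpath')
        · have hzS : g (j + 1) ∈ D.CpPa X ∪ D.CpSib X := by
            rw [D.mem_S_iff]
            rcases D.edge_class hzx with h' | h'
            · exact Or.inl h'
            · exact Or.inr (Dag.cpundir_symm h')
          have hznc : ¬ CollF D g (j + 1) := fun hcf =>
            D.not_edge_both (show D.edge (g j) (g (j + 1)) from hcf.1) hback
          exact (hOP (j + 1) (by omega) hjY).1 hznc hzS
      · -- ¬ Adj X z0
        have hvne : g (j - 1) ≠ g (j + 1) := by
          intro he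
          have := hinj (j - 1) (by omega) (j + 1) (by omega) he
          omega
        have hedgevj : D.edge (g (j - 1)) (g j) := by
          have := hpre (j - 1) (by omega)
          rwa [show j - 1 + 1 = j by omega] at this
        by_cases hadjvz : D.Adj (g (j - 1)) (g (j + 1))
        · have hj2 : 2 ≤ j := by
            by_contra h'
            have hj1 : j = 1 := by omega
            apply hadjXz
            have hvX : g (j - 1) = X := by rw [hj1]; simpa using h0
            rw [← hvX]
            exact hadjvz
          have hpath' := isPathF_dropF ⟨h0, hn, hadj, hinj⟩ (show 1 ≤ j by omega) hjN hadjvz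
          rcases hadjvz with hf | hb'
          · have hB1 : 1 ≤ j - 1 →
                ((CollF D (dropF g j) (j - 1) → ∃ d, D.Anc (g (j - 1)) d ∧
                  d ∈ D.CpPa X ∪ D.CpSib X) ∧
                 (¬ CollF D (dropF g j) (j - 1) → g (j - 1) ∉ D.CpPa X ∪ D.CpSib X)) := by
              intro hkk
              constructor
              · intro hcf
                exfalso
                have h2' := hcf.2
                rw [show j - 1 + 1 = j by omega] at h2'
                rw [show dropF g j j = g (j + 1) from if_neg (by omega),
                  show dropF g j (j - 1) = g (j - 1) from if_pos (by omega)] at h2'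
                exact D.not_edge_both hf h2'
              · intro _
                exact (hOP (j - 1) (by omega) (by omega)).1
                  (hjmin (j - 1) (by omega) (by omega))
            have hB2 : j < N - 1 →
                ((CollF D (dropF g j) j → ∃ d, D.Anc (g (j + 1)) d ∧
                  d ∈ D.CpPa X ∪ D.CpSib X) ∧
                 (¬ CollF D (dropF g j) j → g (j + 1) ∉ D.CpPa X ∪ D.CpSib X)) := by
              intro hkk
              constructor
              · intro _
                exact ⟨c m, (D.edge_anc hback).trans (hAncChain m le_rfl), hcS⟩
              · intro _
                exact (hOP (j + 1) (by omega) (by omega)).1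
                  (fun hcf => D.not_edge_both (show D.edge (g j) (g (j + 1)) from hcf.1) hback)
            exact not_blockF_of_openPt
              (openPt_dropF hOP (show 1 ≤ j by omega) hjN hB1 hB2)
              (hmin (N - 1) (by omega) _ hpath')
          · have hB1 : 1 ≤ j - 1 →
                ((CollF D (dropF g j) (j - 1) → ∃ d, D.Anc (g (j - 1)) d ∧
                  d ∈ D.CpPa X ∪ D.CpSib X) ∧
                 (¬ CollF D (dropF g j) (j - 1) → g (j - 1) ∉ D.CpPa X ∪ D.CpSib X)) := by
              intro hkk
              constructor
              · intro _
                exact ⟨c m, (D.edge_anc hedgevj).trans (hAncChain m le_rfl), hcS⟩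
              · intro hnc
                exfalso
                apply hnc
                constructor
                · rw [show j - 1 - 1 = j - 2 by omega,
                    show dropF g j (j - 2) = g (j - 2) from if_pos (by omega),
                    show dropF g j (j - 1) = g (j - 1) from if_pos (by omega)]
                  have := hpre (j - 2) (by omega)
                  rwa [show j - 2 + 1 = j - 1 by omega] at this
                · rw [show j - 1 + 1 = j by omega,
                    show dropF g j j = g (j + 1) from if_neg (by omega),
                    show dropF g j (j - 1) = g (j - 1) from if_pos (by omega)]
                  exact hb'
            have hB2 : j < N - 1 →
                ((CollF D (dropF g j) j → ∃ d, D.Anc (g (j + 1)) d ∧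
                  d ∈ D.CpPa X ∪ D.CpSib X) ∧
                 (¬ CollF D (dropF g j) j → g (j + 1) ∉ D.CpPa X ∪ D.CpSib X)) := by
              intro hkk
              constructor
              · intro hcf
                exfalso
                have h1' := hcf.1
                rw [show dropF g j (j - 1) = g (j - 1) from if_pos (by omega),
                  show dropF g j j = g (j + 1) from if_neg (by omega)] at h1'
                exact D.not_edge_both h1' hb'
              · intro _
                exact (hOP (j + 1) (by omega) (by omega)).1
                  (fun hcf => D.not_edge_both (show D.edge (g j) (g (j + 1)) from hcf.1) hback)
            exact not_blockF_of_openPt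
              (openPt_dropF hOP (show 1 ≤ j by omega) hjN hB1 hB2)
              (hmin (N - 1) (by omega) _ hpath')
        · -- double anchor walk
          have hcpz0 : D.CpDir (g (j + 1)) (g j) :=
            Dag.vs_compelled (D.mequiv_refl) hback hedgevj (Ne.symm hvne)
              (fun ha => hadjvz ha.symm)
          have hcpv : D.CpDir (g (j - 1)) (g j) := by
            have := hpreCp (j - 1) (by omega)
            rwa [show j - 1 + 1 = j by omega] at this
          have hAncXv : D.Anc X (g (j - 1)) := hAncpre (j - 1) (by omega)
          have hvdir : ¬ D.CpDir (g (j - 1)) X := fun hcd =>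
            D.acyclic _ _ (Dag.cpdir_edge hcd) hAncXv
          have hvundir : ¬ D.CpUndir (g (j - 1)) X := by
            intro hu
            rcases eq_or_lt_of_le (show 1 ≤ j from hj0) with heq1 | hj2
            · have hvX : g (j - 1) = X := by rw [← heq1]; simpa using h0
              rw [hvX] at hu
              exact D.adj_ne hu.1 rfl
            · have hvS : g (j - 1) ∈ D.CpPa X ∪ D.CpSib X := by
                rw [D.mem_S_iff]
                exact Or.inr (Dag.cpundir_symm hu)
              exact (hOP (j - 1) (by omega) (by omega)).1
                (hjmin (j - 1) (by omega) (by omega)) hvS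
          obtain ⟨hsibw, hXw⟩ := D.sib_of_desc (hAncXc m le_rfl) hcS
          have SW : ∀ dd t k', t ≤ m → m - t = dd → k' < t → D.CpDir (c k') (c t) → False := by
            intro dd
            induction dd using Nat.strong_induction_on with
            | _ dd ihd =>
            intro t k' htm hdd hkt hcp
            rcases eq_or_lt_of_le htm with heq | hlt
            · rw [heq] at hcp
              have hu : D.CpUndir (c m) X := Dag.cpundir_symm hsibw
              rcases Dag.r_lemma hcp hu with he | he | he
              · have h1' : D.Anc (g j) X := by
                  rw [← he]
                  exact hAncChain k' (by omega)
                have h2' : X = g j := D.anc_antisymm (hAncpre j le_rfl) h1'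
                have : g j = g 0 := by rw [h0]; exact h2'.symm
                have := hinj j (by omega) 0 (by omega) this
                omega
              · exact D.acyclic _ _ (Dag.cpdir_edge he) (hAncXc k' (by omega))
              · refine hcint k' (by omega) ?_
                rw [D.mem_S_iff]
                exact Or.inr (Dag.cpundir_symm he)
            · rcases D.edge_class (hce t hlt) with hcd | hcu
              · exact ihd (m - (t + 1)) (by omega) (t + 1) t (by omega) rfl (by omega) hcd
              · rcases Dag.r_lemma hcp hcu with he | he | he
                · have hA : D.Anc (c k') (c t) :=
                    D.chainAnc c (show k' ≤ t from by omega) (fun s h1 h2 => hce s (by omega))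
                  rw [he] at hA
                  exact D.acyclic _ _ (hce t hlt) hA
                · exact ihd (m - (t + 1)) (by omega) (t + 1) k' (by omega) rfl (by omega) he
                · have hA : D.Anc (c k') (c (t + 1)) :=
                    D.chainAnc c (show k' ≤ t + 1 from by omega)
                      (fun s h1 h2 => hce s (by omega))
                  have hednew : D.edge (c k') (c (t + 1)) := by
                    rcases he.1 with h' | h'
                    · exact h'
                    · exact absurd hA (D.acyclic _ _ h')
                  refine hmmin (m - (t - k')) (by omega)
                    (fun s => if s ≤ k' then c s else c (s + (t - k'))) ?_ ?_ ?_
                  · show (if (0:ℕ) ≤ k' then c 0 else c (0 + (t - k'))) = g j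
                    rw [if_pos (Nat.zero_le k')]
                    exact hc0
                  · intro s hs
                    show D.edge (if s ≤ k' then c s else c (s + (t - k')))
                      (if s + 1 ≤ k' then c (s + 1) else c (s + 1 + (t - k')))
                    by_cases hsk : s + 1 ≤ k'
                    · rw [if_pos (by omega : s ≤ k'), if_pos hsk]
                      exact hce s (by omega)
                    · by_cases hsk2 : s ≤ k'
                      · have hseq : s = k' := by omega
                        rw [if_pos hsk2, if_neg hsk, hseq,
                          show k' + 1 + (t - k') = t + 1 by omega]
                        exact hednew
                      · rw [if_neg hsk2, if_neg hsk,
                          show s + 1 + (t - k') = (s + (t - k')) + 1 by omega]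
                        exact hce (s + (t - k')) (by omega)
                  · show (if m - (t - k') ≤ k' then c (m - (t - k'))
                        else c (m - (t - k') + (t - k'))) ∈ D.CpPa X ∪ D.CpSib X
                    rw [if_neg (show ¬ m - (t - k') ≤ k' by omega),
                      show m - (t - k') + (t - k') = m by omega]
                    exact hcS
          have DW : ∀ dd t, t ≤ m → m - t = dd → D.CpDir (g (j - 1)) (c t) →
              D.CpDir (g (j + 1)) (c t) → False := by
            intro dd
            induction dd using Nat.strong_induction_on with
            | _ dd ihd =>
            intro t htm hdd hv hz
            rcases eq_or_lt_of_le htm with heq | hlt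
            · rw [heq] at hv
              have hu : D.CpUndir (c m) X := Dag.cpundir_symm hsibw
              rcases Dag.r_lemma hv hu with he | he | he
              · rw [he] at hv
                exact hsibw.2.1 hv
              · exact hvdir he
              · exact hvundir he
            · have hAncvc : ∀ s, s ≤ m → D.Anc (g (j - 1)) (c s) := fun s hs =>
                (D.edge_anc hedgevj).trans (hAncChain s hs)
              have hAnczc : ∀ s, s ≤ m → D.Anc (g (j + 1)) (c s) := fun s hs =>
                (D.edge_anc hback).trans (hAncChain s hs)
              rcases D.edge_class (hce t hlt) with hcd | hcu
              · exact SW (m - (t + 1)) (t + 1) t (by omega) rfl (by omega) hcd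
              · have hvne' : g (j - 1) ≠ c (t + 1) := by
                  intro he
                  have hA := hAncvc t (by omega)
                  rw [he] at hA
                  exact D.acyclic _ _ (hce t hlt) hA
                have hzne' : g (j + 1) ≠ c (t + 1) := by
                  intro he
                  have hA := hAnczc t (by omega)
                  rw [he] at hA
                  exact D.acyclic _ _ (hce t hlt) hA
                rcases Dag.r_lemma hv hcu with he1 | he1 | he1
                · exact hvne' he1
                · rcases Dag.r_lemma hz hcu with he2 | he2 | he2
                  · exact hzne' he2
                  · exact ihd (m - (t + 1)) (by omega) (t + 1) (by omega) rfl he1 he2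
                  · rcases Dag.r_lemma he1 (Dag.cpundir_symm he2) with he3 | he3 | he3
                    · exact hvne he3
                    · exact hadjvz (Or.inl (Dag.cpdir_edge he3))
                    · exact hadjvz he3.1
                · rcases Dag.r_lemma hz hcu with he2 | he2 | he2
                  · exact hzne' he2
                  · rcases Dag.r_lemma he2 (Dag.cpundir_symm he1) with he3 | he3 | he3
                    · exact hvne he3.symm
                    · exact hadjvz (Or.inr (Dag.cpdir_edge he3))
                    · exact hadjvz (Dag.cpundir_symm he3).1
                  · have hev : D.edge (g (j - 1)) (c (t + 1)) := by
                      rcases he1.1 with h' | h'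
                      · exact h'
                      · exact absurd (hAncvc (t + 1) (by omega)) (D.acyclic _ _ h')
                    have hez : D.edge (g (j + 1)) (c (t + 1)) := by
                      rcases he2.1 with h' | h'
                      · exact h'
                      · exact absurd (hAnczc (t + 1) (by omega)) (D.acyclic _ _ h')
                    exact he1.2.1
                      (Dag.vs_compelled (D.mequiv_refl) hev hez hvne hadjvz)
          have h1' := hcpv
          have h2' := hcpz0
          rw [← hc0] at h1' h2'
          exact DW m 0 (Nat.zero_le m) (by omega) h1' h2'

end Aux6
/-- For distinct non-adjacent `X`, `Y`, `X` is an explicit ancestor of `Y`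
in the CPDAG `G` of the MEC of a DAG iff `X` and `Y` are not d-separated by
`Pa_G(X) ∪ Sib_G(X)` in the DAGs of the MEC (the d-separation relations being the same
in every DAG of the MEC). -/
theorem explAn_iff_not_dSep_pa_union_sib
    {V : Type*} [Fintype V] (D : Dag V) (X Y : V) (hXY : X ≠ Y)
    (hnadj : ¬ D.Adj X Y) :
    D.ExplAn X Y ↔
      ∀ D' : Dag V, D.MEquiv D' → ¬ D'.dSep X Y (D.CpPa X ∪ D.CpSib X) := by
  constructor
  · intro hE D' hM hsep
    exact Dag.explAn_not_dSep hE ((hM X Y _).mpr hsep)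
  · intro hAll
    by_contra hnE
    exact hAll D (D.mequiv_refl) (Dag.main_sep hXY hnadj hnE)
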